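/- Let B be an m×m real symmetric positive definite matrix, A an m×m real symmetric matrix, and Q an m×k real matrix with Qᵀ B Q = I_k. Set C := B⁻¹ A and Π := Q Qᵀ B, and suppose ‖(I − Π) C‖_B ≤ ε. Then for every real eigenvalue μ of the matrix Π C Π there exists a real eigenvalue λ of C with |μ − λ| ≤ 2ε. -/

import Mathlib

open Matrix
open scoped RealInnerProductSpace
open scoped MatrixOrder

/-- The vector `B`-norm `‖x‖_B = √(xᵀ B x)`. -/
noncomputable def vecMNorm {m : ℕ} (M : Matrix (Fin m) (Fin m) ℝ) (x : Fin m → ℝ) : ℝ :=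
  Real.sqrt (x ⬝ᵥ (M *ᵥ x))

/-- The induced operator `B`-norm `‖A‖_B = sup_{x ≠ 0} ‖A x‖_B / ‖x‖_B`. -/
noncomputable def matMNorm {m : ℕ} (M A : Matrix (Fin m) (Fin m) ℝ) : ℝ :=
  ⨆ x : {x : Fin m → ℝ // x ≠ 0}, vecMNorm M (A *ᵥ (x : Fin m → ℝ)) / vecMNorm M (x : Fin m → ℝ)

noncomputable def toE {m : ℕ} (v : Fin m → ℝ) : EuclideanSpace ℝ (Fin m) :=
  (WithLp.equiv 2 _).symm v

lemma toE_norm {m : ℕ} (v : Fin m → ℝ) : ‖toE v‖ = Real.sqrt (v ⬝ᵥ v) := by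
  rw [toE, EuclideanSpace.norm_eq]
  congr 1
  simp [dotProduct, Real.norm_eq_abs, sq_abs, pow_two]

lemma toE_inj {m : ℕ} {v w : Fin m → ℝ} (h : toE v = toE w) : v = w :=
  (WithLp.equiv 2 _).symm.injective h

lemma toE_dot {m : ℕ} (v w : Fin m → ℝ) : ⟪toE v, toE w⟫ = v ⬝ᵥ w := by
  simp [toE, PiLp.inner_apply, dotProduct, RCLike.inner_apply, mul_comm]

lemma dot_self_nonneg {m : ℕ} (v : Fin m → ℝ) : 0 ≤ v ⬝ᵥ v :=
  Finset.sum_nonneg fun i _ => mul_self_nonneg _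

lemma toE_sq {m : ℕ} (v : Fin m → ℝ) : ‖toE v‖ ^ 2 = v ⬝ᵥ v := by
  rw [toE_norm, Real.sq_sqrt (dot_self_nonneg v)]

lemma toE_add {m : ℕ} (v w : Fin m → ℝ) : toE (v + w) = toE v + toE w := rfl
lemma toE_sub {m : ℕ} (v w : Fin m → ℝ) : toE (v - w) = toE v - toE w := rfl
lemma toE_smul {m : ℕ} (c : ℝ) (v : Fin m → ℝ) : toE (c • v) = c • toE v := rfl

set_option synthInstance.maxHeartbeats 1000000 in
/-- Euclidean operator bound for any matrix. -/
lemma exists_opBound {m : ℕ} (M : Matrix (Fin m) (Fin m) ℝ) :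
    ∃ K : ℝ, 0 ≤ K ∧ ∀ u : Fin m → ℝ, ‖toE (M *ᵥ u)‖ ≤ K * ‖toE u‖ := by
  refine ⟨‖LinearMap.toContinuousLinearMap (Matrix.toEuclideanLin M)‖, ContinuousLinearMap.opNorm_nonneg _, ?_⟩
  intro u
  have := (LinearMap.toContinuousLinearMap (Matrix.toEuclideanLin M)).le_opNorm (toE u)
  simpa [toE, Matrix.toEuclideanLin_apply] using this

/-- transpose keeps Euclidean operator bounds. -/
lemma transpose_bound {m : ℕ} (M : Matrix (Fin m) (Fin m) ℝ) (c : ℝ) (hc : 0 ≤ c)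
    (h : ∀ u, ‖toE (M *ᵥ u)‖ ≤ c * ‖toE u‖) :
    ∀ u, ‖toE (Mᵀ *ᵥ u)‖ ≤ c * ‖toE u‖ := by
  intro u
  set a := Mᵀ *ᵥ u with ha
  rcases eq_or_ne (‖toE a‖) 0 with h0 | h0
  · rw [h0]; positivity
  have hsq : ‖toE a‖ ^ 2 = ⟪toE u, toE (M *ᵥ a)⟫ := by
    rw [toE_sq, toE_dot, ha, mulVec_transpose, ← dotProduct_mulVec]
  have h2 : ‖toE a‖ ^ 2 ≤ ‖toE u‖ * (c * ‖toE a‖) := by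
    rw [hsq]
    exact le_trans (real_inner_le_norm _ _)
      (mul_le_mul_of_nonneg_left (h a) (norm_nonneg _))
  have hpos : 0 < ‖toE a‖ := lt_of_le_of_ne (norm_nonneg _) (Ne.symm h0)
  nlinarith [hpos]

/-- residual bound implies nearby eigenvalue for a real symmetric matrix. -/
lemma sym_residual {m : ℕ} (S : Matrix (Fin m) (Fin m) ℝ) (hS : S.IsHermitian)
    (μ c : ℝ) (v : Fin m → ℝ) (hv : v ≠ 0)
    (hres : ‖toE (S *ᵥ v - μ • v)‖ ≤ c * ‖toE v‖) :
    ∃ lam : ℝ, (∃ w : Fin m → ℝ, w ≠ 0 ∧ S *ᵥ w = lam • w) ∧ |μ - lam| ≤ c := by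
  have hne : Nonempty (Fin m) := by
    by_contra h
    exact hv (funext fun i => absurd ⟨i⟩ h)
  set b := hS.eigenvectorBasis with hb
  set lam := hS.eigenvalues with hlam
  obtain ⟨i₀, -, hmin⟩ := Finset.exists_min_image (Finset.univ : Finset (Fin m))
    (fun i => |μ - lam i|) ⟨hne.some, Finset.mem_univ _⟩
  -- coordinates
  have hcoord : ∀ w : Fin m → ℝ, ∀ i, b.repr (toE w) i = (⇑(b i)) ⬝ᵥ w := by
    intro w i
    rw [b.repr_apply_apply, ← toE_dot]
    rfl
  have hkey : ∀ i, b.repr (toE (S *ᵥ v - μ • v)) i = (lam i - μ) * b.repr (toE v) i := by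
    intro i
    rw [hcoord, hcoord]
    have hsymm : Sᵀ = S := by rw [← conjTranspose_eq_transpose_of_trivial, hS.eq]
    have hbe := hS.mulVec_eigenvectorBasis i
    have h1 : (⇑(b i)) ⬝ᵥ (S *ᵥ v) = lam i * ((⇑(b i)) ⬝ᵥ v) := by
      rw [dotProduct_mulVec, ← hsymm, vecMul_transpose, hbe, smul_dotProduct, smul_eq_mul]
    have h2 : (⇑(b i)) ⬝ᵥ (S *ᵥ v - μ • v) = (lam i - μ) * ((⇑(b i)) ⬝ᵥ v) := by
      rw [dotProduct_sub, h1, dotProduct_smul, smul_eq_mul]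
      ring
    exact h2
  -- squared norms via the orthonormal basis
  have hnorm2 : ∀ w : Fin m → ℝ, ‖toE w‖ ^ 2 = ∑ i, (b.repr (toE w) i) ^ 2 := by
    intro w
    rw [← b.repr.norm_map (toE w), EuclideanSpace.norm_eq,
      Real.sq_sqrt (Finset.sum_nonneg fun i _ => sq_nonneg _)]
    simp [Real.norm_eq_abs, sq_abs]
  have hvpos : 0 < ‖toE v‖ := by
    rw [norm_pos_iff]
    intro h
    exact hv (toE_inj (h.trans rfl))
  have hc0 : 0 ≤ c := by
    by_contra hc
    push_neg at hc
    have : c * ‖toE v‖ < 0 := mul_neg_of_neg_of_pos hc hvpos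
    exact absurd (lt_of_le_of_lt (le_trans (norm_nonneg _) hres) this) (lt_irrefl 0)
  have hlow : |μ - lam i₀| ^ 2 * ‖toE v‖ ^ 2 ≤ ‖toE (S *ᵥ v - μ • v)‖ ^ 2 := by
    rw [hnorm2, hnorm2, Finset.mul_sum]
    apply Finset.sum_le_sum
    intro i _
    rw [hkey i, mul_pow]
    apply mul_le_mul_of_nonneg_right _ (sq_nonneg _)
    have h1 : |μ - lam i₀| ≤ |lam i - μ| := by
      have := hmin i (Finset.mem_univ i)
      rwa [abs_sub_comm μ (lam i)] at this
    calc |μ - lam i₀| ^ 2 ≤ |lam i - μ| ^ 2 :=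
          pow_le_pow_left₀ (abs_nonneg _) h1 2
      _ = (lam i - μ) ^ 2 := sq_abs _
  have hupper : ‖toE (S *ᵥ v - μ • v)‖ ^ 2 ≤ c ^ 2 * ‖toE v‖ ^ 2 := by
    have := pow_le_pow_left₀ (norm_nonneg _) hres 2
    rw [mul_pow] at this
    exact this
  have hfin : |μ - lam i₀| ≤ c := by
    have hv2 : 0 < ‖toE v‖ ^ 2 := pow_pos hvpos 2
    have hsq : |μ - lam i₀| ^ 2 ≤ c ^ 2 :=
      le_of_mul_le_mul_right (hlow.trans hupper) hv2
    have := Real.sqrt_le_sqrt hsq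
    rwa [Real.sqrt_sq (abs_nonneg _), Real.sqrt_sq hc0] at this
  refine ⟨lam i₀, ⟨⇑(b i₀), ?_, hS.mulVec_eigenvectorBasis i₀⟩, hfin⟩
  intro h
  have hbz : b i₀ = 0 := by
    have : toE (⇑(b i₀)) = b i₀ := rfl
    rw [← this, h]
    rfl
  exact b.orthonormal.ne_zero i₀ hbz

set_option maxHeartbeats 2000000 in
theorem stmt_13 {m k : ℕ} (B A : Matrix (Fin m) (Fin m) ℝ)
    (Q : Matrix (Fin m) (Fin k) ℝ) (ε : ℝ)
    (hB : B.PosDef) (hA : A.IsSymm) (hQ : Qᵀ * B * Q = 1)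
    (herr : matMNorm B ((1 - Q * Qᵀ * B) * (B⁻¹ * A)) ≤ ε) :
    ∀ μ : ℝ,
      (∃ y : Fin m → ℝ, y ≠ 0 ∧
        ((Q * Qᵀ * B) * (B⁻¹ * A) * (Q * Qᵀ * B)) *ᵥ y = μ • y) →
      ∃ lam : ℝ,
        (∃ x : Fin m → ℝ, x ≠ 0 ∧ (B⁻¹ * A) *ᵥ x = lam • x) ∧
        |μ - lam| ≤ 2 * ε := by
  rintro μ ⟨y, hy0, heig⟩
  classical
  set R := CFC.sqrt B with hRdef
  have hRR : R * R = B := CFC.sqrt_mul_sqrt_self B hB.posSemidef.nonneg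
  have hRsym : Rᵀ = R := by
    rw [← conjTranspose_eq_transpose_of_trivial,
      (CFC.sqrt_nonneg B).posSemidef.isHermitian.eq]
  have hBdet : IsUnit B.det := isUnit_iff_ne_zero.mpr (ne_of_gt hB.det_pos)
  have hRdet : IsUnit R.det := by
    have := hBdet
    rw [← hRR, det_mul] at this
    exact (IsUnit.mul_iff.mp this).1
  have hRiR : R⁻¹ * R = 1 := nonsing_inv_mul R hRdet
  have hRRi : R * R⁻¹ = 1 := mul_nonsing_inv R hRdet
  have hRisym : (R⁻¹)ᵀ = R⁻¹ := by rw [transpose_nonsing_inv, hRsym]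
  have hBinv : B⁻¹ = R⁻¹ * R⁻¹ := by rw [← hRR, Matrix.mul_inv_rev]
  have hAsym : Aᵀ = A := hA
  set Cm := B⁻¹ * A with hCmdef
  set Pi := Q * Qᵀ * B with hPidef
  set S := R⁻¹ * A * R⁻¹ with hSdef
  set P := R * (Q * Qᵀ) * R with hPdef
  -- basic matrix identities
  have hRBi : R * B⁻¹ = R⁻¹ := by
    rw [hBinv, ← Matrix.mul_assoc, hRRi, Matrix.one_mul]
  have hI1 : R * Cm = S * R := by
    rw [hCmdef, ← Matrix.mul_assoc, hRBi, hSdef, Matrix.mul_assoc (R⁻¹ * A) R⁻¹ R,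
      hRiR, Matrix.mul_one]
  have hI2 : R * Pi = P * R := by
    rw [hPidef, hPdef, ← hRR]
    simp only [Matrix.mul_assoc]
  have hI3 : Pᵀ = P := by
    rw [hPdef]
    simp only [transpose_mul, transpose_transpose, hRsym]
    simp only [Matrix.mul_assoc]
  have hQ' : ∀ X : Matrix (Fin k) (Fin m) ℝ, Qᵀ * (R * (R * (Q * X))) = X := by
    intro X
    have h1 : Qᵀ * (R * (R * (Q * X))) = (Qᵀ * B * Q) * X := by
      rw [← hRR]
      simp only [Matrix.mul_assoc]
    rw [h1, hQ, Matrix.one_mul]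
  have hI4 : P * P = P := by
    rw [hPdef]
    simp only [Matrix.mul_assoc]
    rw [hQ' (Qᵀ * R)]
  have hI5 : Sᵀ = S := by
    rw [hSdef]
    simp only [transpose_mul, hRisym, hAsym]
    rw [Matrix.mul_assoc]
  have hI6 : R * ((1 - Pi) * Cm) = (1 - P) * S * R := by
    have e1 : R * (Pi * Cm) = P * S * R := by
      rw [← Matrix.mul_assoc, hI2, Matrix.mul_assoc, hI1, ← Matrix.mul_assoc]
    calc R * ((1 - Pi) * Cm) = R * Cm - R * (Pi * Cm) := by
          rw [sub_mul, one_mul, mul_sub]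
      _ = S * R - P * S * R := by rw [e1, hI1]
      _ = (1 - P) * S * R := by rw [sub_mul, one_mul, sub_mul]
  have hI7 : R * (Pi * Cm * Pi) = (P * S * P) * R := by
    calc R * (Pi * Cm * Pi) = ((R * Pi) * Cm) * Pi := by simp only [Matrix.mul_assoc]
      _ = (P * (R * Cm)) * Pi := by rw [hI2]; simp only [Matrix.mul_assoc]
      _ = (P * (S * R)) * Pi := by rw [hI1]
      _ = (P * S) * (R * Pi) := by simp only [Matrix.mul_assoc]
      _ = (P * S) * (P * R) := by rw [hI2]
      _ = (P * S * P) * R := by simp only [Matrix.mul_assoc]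
  have hI8 : Cm * R⁻¹ = R⁻¹ * S := by
    rw [hCmdef, hBinv, hSdef]
    simp only [Matrix.mul_assoc]
  -- injectivity of R
  have hmulinj : ∀ x : Fin m → ℝ, R *ᵥ x = 0 → x = 0 := by
    intro x h
    have h2 : R⁻¹ *ᵥ (R *ᵥ x) = x := by rw [mulVec_mulVec, hRiR, one_mulVec]
    rw [h, mulVec_zero] at h2
    exact h2.symm
  -- B-norm as Euclidean norm of R *ᵥ x
  have hvR : ∀ x : Fin m → ℝ, x ᵥ* R = R *ᵥ x := by
    intro x
    rw [← mulVec_transpose, hRsym]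
  have hBnorm : ∀ x, vecMNorm B x = ‖toE (R *ᵥ x)‖ := by
    intro x
    rw [vecMNorm, toE_norm]
    congr 1
    rw [← hRR, ← mulVec_mulVec, dotProduct_mulVec, hvR]
  have hEpos : ∀ x : Fin m → ℝ, x ≠ 0 → 0 < ‖toE (R *ᵥ x)‖ := by
    intro x hx
    rw [norm_pos_iff]
    intro h
    exact hx (hmulinj x (toE_inj (h.trans rfl)))
  -- extraction of the ε bound for all vectors
  set Nm := (1 - Pi) * Cm with hNmdef
  obtain ⟨K, hK0, hK⟩ := exists_opBound (R * Nm * R⁻¹)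
  have hRNR : ∀ x : Fin m → ℝ, R *ᵥ (Nm *ᵥ x) = (R * Nm * R⁻¹) *ᵥ (R *ᵥ x) := by
    intro x
    rw [mulVec_mulVec, mulVec_mulVec, Matrix.mul_assoc (R * Nm) R⁻¹ R, hRiR,
      Matrix.mul_one]
  have hbdd : BddAbove (Set.range fun x : {x : Fin m → ℝ // x ≠ 0} =>
      vecMNorm B (Nm *ᵥ (x : Fin m → ℝ)) / vecMNorm B (x : Fin m → ℝ)) := by
    refine ⟨K, ?_⟩
    rintro r ⟨⟨x, hx⟩, rfl⟩
    simp only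
    rw [hBnorm, hBnorm, div_le_iff₀ (hEpos x hx), hRNR]
    exact hK _
  have herr' : (⨆ x : {x : Fin m → ℝ // x ≠ 0},
      vecMNorm B (Nm *ᵥ (x : Fin m → ℝ)) / vecMNorm B (x : Fin m → ℝ)) ≤ ε := herr
  have hratio : ∀ x : Fin m → ℝ, vecMNorm B (Nm *ᵥ x) ≤ ε * vecMNorm B x := by
    intro x
    rcases eq_or_ne x 0 with rfl | hx
    · simp [vecMNorm]
    · have h1 : vecMNorm B (Nm *ᵥ x) / vecMNorm B x ≤ ε :=
        le_trans (le_ciSup hbdd ⟨x, hx⟩) herr'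
      rwa [div_le_iff₀ (by rw [hBnorm]; exact hEpos x hx)] at h1
  have hε : 0 ≤ ε := by
    have h1 : (0:ℝ) ≤ vecMNorm B (Nm *ᵥ y) / vecMNorm B y :=
      div_nonneg (Real.sqrt_nonneg _) (Real.sqrt_nonneg _)
    exact le_trans h1 (le_trans (le_ciSup hbdd ⟨y, hy0⟩) herr')
  have hNbound : ∀ u : Fin m → ℝ, ‖toE (((1 - P) * S) *ᵥ u)‖ ≤ ε * ‖toE u‖ := by
    intro u
    have hu : R *ᵥ (R⁻¹ *ᵥ u) = u := by rw [mulVec_mulVec, hRRi, one_mulVec]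
    set x := R⁻¹ *ᵥ u with hxdef
    have hfact : (1 - P) * S = R * Nm * R⁻¹ := by
      rw [hI6, Matrix.mul_assoc ((1 - P) * S) R R⁻¹, hRRi, Matrix.mul_one]
    have h2 : ((1 - P) * S) *ᵥ u = R *ᵥ (Nm *ᵥ x) := by
      rw [hfact, hRNR x, hu]
    rw [h2, ← hBnorm]
    calc vecMNorm B (Nm *ᵥ x) ≤ ε * vecMNorm B x := hratio x
      _ = ε * ‖toE u‖ := by rw [hBnorm, hu]
  have hPbound : ∀ u : Fin m → ℝ, ‖toE (P *ᵥ u)‖ ≤ ‖toE u‖ := by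
    intro u
    have hvP : ∀ z : Fin m → ℝ, z ᵥ* P = P *ᵥ z := by
      intro z
      rw [← mulVec_transpose, hI3]
    have haa : (P *ᵥ u) ⬝ᵥ (P *ᵥ u) = u ⬝ᵥ (P *ᵥ (P *ᵥ u)) := by
      rw [dotProduct_mulVec u P, hvP]
    have hPa : P *ᵥ (P *ᵥ u) = P *ᵥ u := by rw [mulVec_mulVec, hI4]
    rcases eq_or_ne (‖toE (P *ᵥ u)‖) 0 with h0 | h0
    · rw [h0]; exact norm_nonneg _
    · have h2 : ‖toE (P *ᵥ u)‖ ^ 2 ≤ ‖toE u‖ * ‖toE (P *ᵥ u)‖ := by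
        rw [toE_sq, haa, hPa, ← toE_dot]
        exact real_inner_le_norm _ _
      have hpos : 0 < ‖toE (P *ᵥ u)‖ := lt_of_le_of_ne (norm_nonneg _) (Ne.symm h0)
      nlinarith
  have hPSbound : ∀ u : Fin m → ℝ, ‖toE ((P * S * (1 - P)) *ᵥ u)‖ ≤ ε * ‖toE u‖ := by
    have hM : ∀ u, ‖toE (((1 - P) * S * P) *ᵥ u)‖ ≤ ε * ‖toE u‖ := by
      intro u
      have h1 : ((1 - P) * S * P) *ᵥ u = ((1 - P) * S) *ᵥ (P *ᵥ u) := by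
        rw [mulVec_mulVec]
      rw [h1]
      exact le_trans (hNbound _) (mul_le_mul_of_nonneg_left (hPbound u) hε)
    have htr := transpose_bound _ ε hε hM
    intro u
    have h2 : P * S * (1 - P) = ((1 - P) * S * P)ᵀ := by
      rw [transpose_mul ((1 - P) * S) P, transpose_mul (1 - P) S, transpose_sub,
        transpose_one, hI3, hI5]
      simp only [Matrix.mul_assoc]
    rw [h2]
    exact htr u
  -- translate the eigen equation
  set v := R *ᵥ y with hvdef
  have hv0 : v ≠ 0 := fun h => hy0 (hmulinj y h)
  have hPSP : (P * S * P) *ᵥ v = μ • v := by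
    rw [hvdef, mulVec_mulVec, ← hI7, ← mulVec_mulVec, heig, mulVec_smul]
  have hresid : S *ᵥ v - μ • v = (P * S * (1 - P)) *ᵥ v + ((1 - P) * S) *ᵥ v := by
    have hmat : S = P * S * P + (P * S * (1 - P) + (1 - P) * S) := by noncomm_ring
    calc S *ᵥ v - μ • v
        = (P * S * P) *ᵥ v + ((P * S * (1 - P)) *ᵥ v + ((1 - P) * S) *ᵥ v) - μ • v := by
          conv_lhs => rw [hmat]
          rw [add_mulVec, add_mulVec]
      _ = (P * S * (1 - P)) *ᵥ v + ((1 - P) * S) *ᵥ v := by rw [hPSP]; abel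
  have hresbound : ‖toE (S *ᵥ v - μ • v)‖ ≤ (2 * ε) * ‖toE v‖ := by
    rw [hresid]
    calc ‖toE ((P * S * (1 - P)) *ᵥ v + ((1 - P) * S) *ᵥ v)‖
        = ‖toE ((P * S * (1 - P)) *ᵥ v) + toE (((1 - P) * S) *ᵥ v)‖ := by rw [toE_add]
      _ ≤ ‖toE ((P * S * (1 - P)) *ᵥ v)‖ + ‖toE (((1 - P) * S) *ᵥ v)‖ := norm_add_le _ _
      _ ≤ ε * ‖toE v‖ + ε * ‖toE v‖ := add_le_add (hPSbound v) (hNbound v)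
      _ = (2 * ε) * ‖toE v‖ := by ring
  have hSherm : S.IsHermitian := by
    show Sᴴ = S
    rw [conjTranspose_eq_transpose_of_trivial, hI5]
  obtain ⟨lam, ⟨w, hw0, hws⟩, hcl⟩ := sym_residual S hSherm μ (2 * ε) v hv0 hresbound
  refine ⟨lam, ⟨R⁻¹ *ᵥ w, ?_, ?_⟩, hcl⟩
  · intro h
    apply hw0
    have h2 : R *ᵥ (R⁻¹ *ᵥ w) = w := by rw [mulVec_mulVec, hRRi, one_mulVec]
    rw [h, mulVec_zero] at h2
    exact h2.symm
  · show Cm *ᵥ (R⁻¹ *ᵥ w) = lam • (R⁻¹ *ᵥ w)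
    rw [mulVec_mulVec, hI8, ← mulVec_mulVec, hws, mulVec_smul]
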